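/- arXiv:0907.3932 — 3 statements merged into one kernel-verified Lean document; each statement's English description precedes it below -/
import Mathlib

section
/- Equality in the Bliss lemma: For q > p > 1, r = q/p - 1, and g(s) = (c·s^r + 1)^{-(r+1)/r} with c > 0, equality holds: [∫₀^∞ (∫₀^s g(t) dt)^q s^{r-q} ds]^{p/q} = K · ∫₀^∞ g(s)^p ds, with K = (q - r - 1)^{-p/q} [ r Γ(q/r) / (Γ(1/r)Γ((q-1)/r)) ]^{rp/q}. -/
open MeasureTheory Real Set

lemma beta_Ioo {a b : ℝ} (ha : 0 < a) (hb : 0 < b) :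
    ∫ x in Ioo (0:ℝ) 1, x ^ (a-1) * (1-x) ^ (b-1) = Gamma a * Gamma b / Gamma (a+b) := by
  have key : Complex.Gamma a * Complex.Gamma b
      = Complex.Gamma (a + b) * Complex.betaIntegral a b :=
    Complex.Gamma_mul_Gamma_eq_betaIntegral (by simpa using ha) (by simpa using hb)
  have h1 : Complex.betaIntegral a b
      = ((∫ x in (0:ℝ)..1, x ^ (a-1) * (1-x) ^ (b-1) : ℝ) : ℂ) := by
    rw [Complex.betaIntegral, ← intervalIntegral.integral_ofReal]
    refine intervalIntegral.integral_congr fun x hx => ?_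
    have hx' : x ∈ Icc (0:ℝ) 1 := by simpa [uIcc_of_le (zero_le_one)] using hx
    rw [Complex.ofReal_mul, Complex.ofReal_cpow hx'.1, Complex.ofReal_cpow (by linarith [hx'.2] : (0:ℝ) ≤ 1 - x)]
    push_cast
    ring
  have h2 : (∫ x in (0:ℝ)..1, x ^ (a-1) * (1-x) ^ (b-1) : ℝ)
      = ∫ x in Ioo (0:ℝ) 1, x ^ (a-1) * (1-x) ^ (b-1) := by
    rw [intervalIntegral.integral_of_le zero_le_one, ← integral_Ioc_eq_integral_Ioo]
  have hG : Complex.Gamma ((a:ℂ) + b) ≠ 0 := by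
    rw [← Complex.ofReal_add]
    simp only [Complex.Gamma_ofReal]
    exact_mod_cast (Real.Gamma_pos_of_pos (by linarith)).ne'
  have : ((∫ x in Ioo (0:ℝ) 1, x ^ (a-1) * (1-x) ^ (b-1) : ℝ) : ℂ)
      = (Complex.Gamma a * Complex.Gamma b) / Complex.Gamma ((a:ℂ)+b) := by
    rw [key]
    rw [h1, h2] at *
    field_simp
  rw [← Complex.ofReal_add, Complex.Gamma_ofReal, Complex.Gamma_ofReal,
    Complex.Gamma_ofReal] at this
  exact_mod_cast this

lemma image_div_one_sub : (fun x : ℝ => x / (1-x)) '' Ioo 0 1 = Ioi 0 := by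
  ext t
  constructor
  · rintro ⟨x, hx, rfl⟩
    exact div_pos hx.1 (by linarith [hx.2])
  · intro ht
    have ht' : (0:ℝ) < t := ht
    refine ⟨t / (1+t), ⟨div_pos ht (by linarith), (div_lt_one (by linarith : (0:ℝ) < 1+t)).2 (by linarith)⟩, ?_⟩
    have h1 : (1:ℝ) + t ≠ 0 := by linarith
    field_simp
    ring

lemma beta_Ioi {a b : ℝ} (ha : 0 < a) (hb : 0 < b) :
    ∫ t in Ioi (0:ℝ), t ^ (a-1) * (1+t) ^ (-(a+b)) = Gamma a * Gamma b / Gamma (a+b) := by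
  have hderiv : ∀ x ∈ Ioo (0:ℝ) 1, HasDerivWithinAt (fun x : ℝ => x / (1-x))
      (((1-x)^2)⁻¹) (Ioo 0 1) x := by
    intro x hx
    have h1 : (1:ℝ) - x ≠ 0 := (sub_pos.2 hx.2).ne'
    have : HasDerivAt (fun x : ℝ => x / (1-x)) (((1-x)^2)⁻¹) x := by
      have := (hasDerivAt_id x).div ((hasDerivAt_id x).const_sub 1) h1
      convert this using 1
      · rfl
      · rfl
      · funext y; rfl
      · simp only [id]; ring
    exact this.hasDerivWithinAt
  have hinj : InjOn (fun x : ℝ => x / (1-x)) (Ioo 0 1) := by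
    intro x hx y hy hxy
    have h1 : (1:ℝ) - x ≠ 0 := (sub_pos.2 hx.2).ne'
    have h2 : (1:ℝ) - y ≠ 0 := (sub_pos.2 hy.2).ne'
    field_simp at hxy
    linarith
  have key := integral_image_eq_integral_abs_deriv_smul measurableSet_Ioo hderiv hinj
    (fun t : ℝ => t ^ (a-1) * (1+t) ^ (-(a+b)))
  rw [image_div_one_sub] at key
  rw [key, ← beta_Ioo ha hb]
  refine setIntegral_congr_fun measurableSet_Ioo fun x hx => ?_
  have hx0 : 0 < x := hx.1
  have hx1 : 0 < 1 - x := by linarith [hx.2]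
  have h1x : (1:ℝ) + x / (1-x) = (1-x)⁻¹ := by field_simp; ring
  have h2 : (((1-x)^2)⁻¹ : ℝ) = (1-x) ^ (-2:ℝ) := by
    rw [← Real.rpow_natCast (1-x) 2, ← Real.rpow_neg hx1.le]; norm_num
  have h3 : ((1-x)⁻¹) ^ (-(a+b)) = (1-x) ^ (a+b) := by
    rw [← Real.rpow_neg_one (1-x), ← Real.rpow_mul hx1.le]; norm_num
  rw [smul_eq_mul, abs_of_pos (by positivity), h1x, h2, h3,
    Real.div_rpow hx0.le hx1.le, div_eq_mul_inv, ← Real.rpow_neg hx1.le]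
  calc (1-x) ^ (-2:ℝ) * (x ^ (a-1) * (1-x) ^ (-(a-1)) * (1-x) ^ (a+b))
      = x ^ (a-1) * ((1-x) ^ (-2:ℝ) * ((1-x) ^ (-(a-1)) * (1-x) ^ (a+b))) := by ring
    _ = x ^ (a-1) * (1-x) ^ (b-1) := by
        rw [← Real.rpow_add hx1, ← Real.rpow_add hx1]
        congr 1
        ring

lemma beta_scaled {a b c r : ℝ} (ha : 0 < a) (hc : 0 < c) (hr : 0 < r)
    (hb : 0 < b - a/r) :
    ∫ s in Ioi (0:ℝ), s ^ (a-1) * (1 + c * s ^ r) ^ (-b)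
      = c ^ (-(a/r)) * (Gamma (a/r) * Gamma (b - a/r) / Gamma b) / r := by
  have har : 0 < a / r := div_pos ha hr
  set f : ℝ → ℝ := fun u => (1/r) * (u ^ (a/r - 1) * (1 + c*u) ^ (-b)) with hf
  have step1 : ∫ s in Ioi (0:ℝ), s ^ (a-1) * (1 + c * s ^ r) ^ (-b)
      = ∫ u in Ioi (0:ℝ), f u := by
    rw [← integral_comp_rpow_Ioi_of_pos (g := f) hr]
    refine setIntegral_congr_fun measurableSet_Ioi fun x hx => ?_
    have hx0 : (0:ℝ) < x := hx
    have h1 : (x ^ r) ^ (a/r - 1) = x ^ (a - r) := by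
      rw [← Real.rpow_mul hx0.le]
      congr 1
      field_simp
    simp only [hf, smul_eq_mul]
    rw [h1]
    rw [show r * x ^ (r-1) * (1/r * (x ^ (a-r) * (1 + c * x ^ r) ^ (-b)))
        = (x ^ (r-1) * x ^ (a-r)) * (1 + c * x ^ r) ^ (-b) * (r * (1/r)) by ring,
      ← Real.rpow_add hx0, mul_div_cancel₀ 1 hr.ne']
    ring_nf
  have step2 : ∫ u in Ioi (0:ℝ), u ^ (a/r - 1) * (1 + c*u) ^ (-b)
      = c ^ (-(a/r)) * (Gamma (a/r) * Gamma (b - a/r) / Gamma b) := by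
    have key := integral_comp_mul_left_Ioi
      (g := fun t : ℝ => t ^ (a/r - 1) * (1+t) ^ (-b)) 0 hc
    rw [mul_zero] at key
    have lhs_eq : ∫ x in Ioi (0:ℝ), ((c*x) ^ (a/r - 1) * (1+c*x) ^ (-b))
        = c ^ (a/r - 1) * ∫ x in Ioi (0:ℝ), x ^ (a/r - 1) * (1+c*x) ^ (-b) := by
      rw [← integral_const_mul]
      refine setIntegral_congr_fun measurableSet_Ioi fun x hx => ?_
      have hx0 : (0:ℝ) < x := hx
      rw [Real.mul_rpow hc.le hx0.le]
      ring
    have beta : ∫ x in Ioi (0:ℝ), x ^ (a/r - 1) * (1+x) ^ (-b)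
        = Gamma (a/r) * Gamma (b - a/r) / Gamma b := by
      have := beta_Ioi har hb
      rw [show a/r + (b - a/r) = b by ring] at this
      exact this
    rw [lhs_eq, beta, smul_eq_mul] at key
    have hckey : ∫ x in Ioi (0:ℝ), x ^ (a/r - 1) * (1+c*x) ^ (-b)
        = c ^ (-(a/r - 1)) * (c⁻¹ * (Gamma (a/r) * Gamma (b - a/r) / Gamma b)) := by
      rw [← key]
      rw [← mul_assoc, ← Real.rpow_add hc, neg_add_cancel, Real.rpow_zero, one_mul]
    rw [hckey, ← Real.rpow_neg_one c, ← mul_assoc, ← Real.rpow_add hc]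
    congr 2
    ring
  rw [step1]
  simp only [hf]
  rw [integral_const_mul, step2]
  ring

lemma cont_aux {r c : ℝ} (hr : 0 < r) (hc : 0 < c) (e : ℝ) {s : Set ℝ}
    (hs : ∀ x ∈ s, (0:ℝ) ≤ x) :
    ContinuousOn (fun x : ℝ => (c * x ^ r + 1) ^ e) s := by
  have h1 : ContinuousOn (fun x : ℝ => c * x ^ r + 1) s := by
    refine ContinuousOn.add (ContinuousOn.mul continuousOn_const ?_) continuousOn_const
    refine ContinuousOn.rpow_const continuousOn_id fun x _ => Or.inr hr.le
  refine h1.rpow_const fun x hx => Or.inl ?_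
  have : (0:ℝ) ≤ x ^ r := Real.rpow_nonneg (hs x hx) r
  positivity

lemma inner_int {r c : ℝ} (hr : 0 < r) (hc : 0 < c) {s : ℝ} (hs : 0 < s) :
    ∫ t in Ioc (0:ℝ) s, (c * t ^ r + 1) ^ (-(r+1)/r) = s * (c * s ^ r + 1) ^ (-1/r) := by
  set F : ℝ → ℝ := fun x => x * (c * x ^ r + 1) ^ (-1/r) with hF
  have hcont : ContinuousOn F (Icc 0 s) :=
    ContinuousOn.mul continuousOn_id (cont_aux hr hc _ fun x hx => hx.1)
  have hderiv : ∀ x ∈ Ioo (0:ℝ) s, HasDerivWithinAt F ((c * x ^ r + 1) ^ (-(r+1)/r)) (Ioi x) x := by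
    intro x hx
    have hx0 : (0:ℝ) < x := hx.1
    have hB : (0:ℝ) < c * x ^ r + 1 := by
      have : (0:ℝ) ≤ x ^ r := Real.rpow_nonneg hx0.le r
      positivity
    have hd1 : HasDerivAt (fun x : ℝ => x ^ r) (r * x ^ (r-1)) x :=
      Real.hasDerivAt_rpow_const (Or.inl hx0.ne')
    have hd2 : HasDerivAt (fun x : ℝ => c * x ^ r + 1) (c * (r * x ^ (r-1))) x :=
      (hd1.const_mul c).add_const 1
    have hd3 : HasDerivAt (fun x : ℝ => (c * x ^ r + 1) ^ (-1/r))
        ((c * (r * x ^ (r-1))) * (-1/r) * (c * x ^ r + 1) ^ (-1/r - 1)) x :=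
      hd2.rpow_const (Or.inl hB.ne')
    have hd4 : HasDerivAt F
        (1 * (c * x ^ r + 1) ^ (-1/r)
          + x * ((c * (r * x ^ (r-1))) * (-1/r) * (c * x ^ r + 1) ^ (-1/r - 1))) x :=
      (hasDerivAt_id x).mul hd3
    have heq : 1 * (c * x ^ r + 1) ^ (-1/r)
          + x * ((c * (r * x ^ (r-1))) * (-1/r) * (c * x ^ r + 1) ^ (-1/r - 1))
        = (c * x ^ r + 1) ^ (-(r+1)/r) := by
      have e1 : x * x ^ (r-1) = x ^ r := by
        nth_rewrite 1 [← Real.rpow_one x]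
        rw [← Real.rpow_add hx0]
        norm_num
      have e2 : (c * x ^ r + 1) ^ (-1/r : ℝ)
          = (c * x ^ r + 1) * (c * x ^ r + 1) ^ (-1/r - 1) := by
        nth_rewrite 2 [← Real.rpow_one (c * x ^ r + 1)]
        rw [← Real.rpow_add hB]
        norm_num
      have e3 : (-(r+1)/r : ℝ) = -1/r - 1 := by field_simp; ring
      rw [e3, e2]
      have : x * ((c * (r * x ^ (r-1))) * (-1/r) * (c * x ^ r + 1) ^ (-1/r - 1))
          = -(c * x ^ r) * (c * x ^ r + 1) ^ (-1/r - 1) := by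
        rw [show x * ((c * (r * x ^ (r-1))) * (-1/r) * (c * x ^ r + 1) ^ (-1/r - 1))
            = (x * x ^ (r-1)) * ((r * (1/r)) * (-(c) * (c * x ^ r + 1) ^ (-1/r - 1))) by ring,
          e1, mul_div_cancel₀ 1 hr.ne']
        ring
      rw [this]
      ring
    rw [← heq]
    exact hd4.hasDerivWithinAt
  have hint : IntervalIntegrable (fun t : ℝ => (c * t ^ r + 1) ^ (-(r+1)/r)) volume 0 s := by
    apply ContinuousOn.intervalIntegrable
    rw [uIcc_of_le hs.le]
    exact cont_aux hr hc _ fun x hx => hx.1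
  have := intervalIntegral.integral_eq_sub_of_hasDeriv_right_of_le hs.le hcont hderiv hint
  rw [intervalIntegral.integral_of_le hs.le] at this
  rw [this, hF]
  simp only
  rw [Real.zero_rpow hr.ne', mul_zero, zero_add, Real.one_rpow, zero_mul, sub_zero]

theorem stmt2 (p q r c : ℝ) (hp : 1 < p) (hpq : p < q) (hr : r = q / p - 1)
    (hc : 0 < c) (g : ℝ → ℝ)
    (hgdef : ∀ s, g s = (c * s ^ r + 1) ^ (-(r+1)/r)) :
    (∫ s in Ioi (0:ℝ), (∫ t in Ioc (0:ℝ) s, g t) ^ q * s ^ (r - q)) ^ (p/q) =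
      ((q - r - 1) ^ (-(p/q)) *
        (r * Gamma (q/r) / (Gamma (1/r) * Gamma ((q-1)/r))) ^ (r * p / q)) *
      ∫ s in Ioi (0:ℝ), g s ^ p := by
  have hp0 : (0:ℝ) < p := by linarith
  have hq0 : (0:ℝ) < q := by linarith
  have hq1 : (1:ℝ) < q := by linarith
  have hr0 : (0:ℝ) < r := by
    rw [hr]; have : 1 < q / p := (one_lt_div hp0).2 hpq; linarith
  have hq : q = p * (r + 1) := by rw [hr]; field_simp; ring
  have hD : (0:ℝ) < q - r - 1 := by
    have h1 : q - r - 1 = q * (p - 1) / p := by rw [hr]; field_simp; ring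
    rw [h1]; exact div_pos (mul_pos hq0 (by linarith)) hp0
  have hinner : ∀ s ∈ Ioi (0:ℝ), (∫ t in Ioc (0:ℝ) s, g t) = s * (c * s ^ r + 1) ^ (-1/r) := by
    intro s hs
    rw [show (∫ t in Ioc (0:ℝ) s, g t)
        = ∫ t in Ioc (0:ℝ) s, (c * t ^ r + 1) ^ (-(r+1)/r) by simp only [hgdef]]
    exact inner_int hr0 hc hs
  have hLHS : (∫ s in Ioi (0:ℝ), (∫ t in Ioc (0:ℝ) s, g t) ^ q * s ^ (r - q))
      = ∫ s in Ioi (0:ℝ), s ^ ((r+1)-1) * (1 + c * s ^ r) ^ (-(q/r)) := by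
    refine setIntegral_congr_fun measurableSet_Ioi fun s hs => ?_
    have hs0 : (0:ℝ) < s := hs
    have hB : (0:ℝ) < c * s ^ r + 1 := by
      have : (0:ℝ) ≤ s ^ r := Real.rpow_nonneg hs0.le r
      positivity
    rw [hinner s hs]
    calc (s * (c * s ^ r + 1) ^ (-1/r)) ^ q * s ^ (r-q)
        = (s ^ q * ((c * s ^ r + 1) ^ (-1/r)) ^ q) * s ^ (r-q) := by
          rw [Real.mul_rpow hs0.le (Real.rpow_nonneg hB.le _)]
      _ = (s ^ q * s ^ (r-q)) * (c * s ^ r + 1) ^ ((-1/r)*q) := by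
          rw [← Real.rpow_mul hB.le]; ring
      _ = s ^ ((r+1)-1) * (1 + c * s ^ r) ^ (-(q/r)) := by
          rw [← Real.rpow_add hs0, add_comm (1:ℝ) (c * s ^ r)]
          congr 1
          · congr 1; ring
          · congr 1; field_simp
  have hRHS : (∫ s in Ioi (0:ℝ), g s ^ p)
      = ∫ s in Ioi (0:ℝ), s ^ ((1:ℝ)-1) * (1 + c * s ^ r) ^ (-(q/r)) := by
    refine setIntegral_congr_fun measurableSet_Ioi fun s hs => ?_
    have hs0 : (0:ℝ) < s := hs
    have hB : (0:ℝ) < c * s ^ r + 1 := by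
      have : (0:ℝ) ≤ s ^ r := Real.rpow_nonneg hs0.le r
      positivity
    rw [hgdef s, ← Real.rpow_mul hB.le, show (1:ℝ)-1 = 0 by ring, Real.rpow_zero,
      one_mul, add_comm (1:ℝ) (c * s ^ r)]
    congr 1
    rw [hq]
    field_simp
  have hb1 : (0:ℝ) < q/r - (r+1)/r := by
    have : q/r - (r+1)/r = (q-r-1)/r := by ring
    rw [this]; positivity
  have hb2 : (0:ℝ) < q/r - 1/r := by
    have : q/r - 1/r = (q-1)/r := by ring
    rw [this]
    have : (0:ℝ) < q - 1 := by linarith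
    positivity
  rw [hLHS, hRHS, beta_scaled (by positivity : (0:ℝ) < r+1) hc hr0 hb1,
    beta_scaled one_pos hc hr0 hb2]
  have hG1 : Gamma ((r+1)/r) = (1/r) * Gamma (1/r) := by
    rw [show (r+1)/r = 1/r + 1 from by (field_simp; ring), Real.Gamma_add_one (one_div_ne_zero hr0.ne')]
  have hG2 : Gamma (q/r - (r+1)/r) = (r/(q-r-1)) * Gamma ((q-1)/r) := by
    have hE : (q-1)/r = (q/r - (r+1)/r) + 1 := by field_simp; ring
    rw [hE, Real.Gamma_add_one hb1.ne']
    rw [show q/r - (r+1)/r = (q-r-1)/r by ring]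
    field_simp
  have hG3 : q/r - 1/r = (q-1)/r := by ring
  rw [hG1, hG2, hG3, show (r+1)/r = 1/r + 1 from by (field_simp; ring)]
  have hXp : 0 < Gamma (1/r) := Real.Gamma_pos_of_pos (by positivity)
  have hYp : 0 < Gamma ((q-1)/r) := Real.Gamma_pos_of_pos (div_pos (by linarith) hr0)
  have hGp : 0 < Gamma (q/r) := Real.Gamma_pos_of_pos (by positivity)
  set X := Gamma (1/r)
  set Y := Gamma ((q-1)/r)
  set G := Gamma (q/r)
  have hLbase : c ^ (-(1/r+1)) * (1/r * X * (r/(q-r-1) * Y) / G) / r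
      = c ^ (-(1/r+1)) * X * Y / (r * (q-r-1) * G) := by
    field_simp
  rw [hLbase]
  have hLpos : (0:ℝ) < c ^ (-(1/r+1)) * X * Y / (r*(q-r-1)*G) := by positivity
  have hRpos : (0:ℝ) < (q-r-1)^(-(p/q)) * (r*G/(X*Y))^(r*p/q) * (c^(-(1/r)) * (X*Y/G)/r) := by
    positivity
  refine Real.log_injOn_pos (mem_Ioi.2 (Real.rpow_pos_of_pos hLpos _)) (mem_Ioi.2 hRpos) ?_
  rw [Real.log_rpow hLpos]
  simp only [Real.log_div, Real.log_mul, Real.log_rpow, ne_eq,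
    mul_ne_zero_iff, div_ne_zero_iff, hXp.ne', hYp.ne', hGp.ne', hr0.ne', hD.ne', hc.ne', hc, hD, hr0,
    (Real.rpow_pos_of_pos hc (-(1/r+1))).ne', (Real.rpow_pos_of_pos hc (-(1/r))).ne',
    Real.rpow_pos_of_pos hc (-(1/r+1)), Real.rpow_pos_of_pos hc (-(1/r)),
    not_false_eq_true, and_self,
    (Real.rpow_pos_of_pos hD (-(p/q))).ne',
    (show (0:ℝ) < r*G/(X*Y) by positivity),
    (show (0:ℝ) < r*G/(X*Y) by positivity).ne',
    (Real.rpow_pos_of_pos (show (0:ℝ) < r*G/(X*Y) by positivity) (r*p/q)).ne']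
  generalize Real.log c = lc
  generalize Real.log X = lX
  generalize Real.log Y = lY
  generalize Real.log G = lG
  generalize Real.log r = lr
  generalize Real.log (q-r-1) = lD
  have hr1 : r + 1 ≠ 0 := by positivity
  rw [hq]
  field_simp
  ring
end

section
/- Young's inequality for the exponential density: For 1 < p < 2, 1/p + 1/p' = 1, φ(x) = e^{-|x|}, and every f ∈ L^p(ℝ), ‖φ * f‖_{L^{p'}(ℝ)} ≤ A_p ‖f‖_{L^p(ℝ)} with A_p = (p'/2)^{2/p} [ Γ(2p/(2-p)) / (Γ(2/(2-p)) Γ(p/(2-p))) ]^{2/p - 1}. -/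
open MeasureTheory Real Set
open scoped ENNReal NNReal

lemma ker_int {c : ℝ} (hc : 0 < c) (t : ℝ) :
    Integrable (fun y : ℝ => Real.exp (-(c * |y - t|))) ∧
      ∫ y : ℝ, Real.exp (-(c * |y - t|)) = 2 / c := by
  have hIoi : IntegrableOn (fun y : ℝ => Real.exp (-(c * |y|))) (Ioi 0) := by
    refine ((exp_neg_integrableOn_Ioi 0 hc).congr_fun (fun y hy => ?_) measurableSet_Ioi)
    simp only [abs_of_pos (mem_Ioi.mp hy), neg_mul]
  have hIic : IntegrableOn (fun y : ℝ => Real.exp (-(c * |y|))) (Iic 0) := by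
    rw [← Measure.map_neg_eq_self (volume : Measure ℝ)]
    have m : MeasurableEmbedding fun x : ℝ => -x := (Homeomorph.neg ℝ).measurableEmbedding
    rw [m.integrableOn_map_iff]
    simp_rw [Function.comp_def, abs_neg, neg_preimage, neg_Iic, neg_zero]
    exact (integrableOn_Ici_iff_integrableOn_Ioi).mpr hIoi
  have hint0 : Integrable (fun y : ℝ => Real.exp (-(c * |y|))) := by
    rw [← integrableOn_univ, ← Iic_union_Ioi (a := (0:ℝ))]
    exact hIic.union hIoi
  have hint : Integrable (fun y : ℝ => Real.exp (-(c * |y - t|))) :=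
    hint0.comp_sub_right t
  refine ⟨hint, ?_⟩
  have h1 : ∫ y : ℝ, Real.exp (-(c * |y - t|)) = ∫ y : ℝ, Real.exp (-(c * |y|)) :=
    integral_sub_right_eq_self (fun y : ℝ => Real.exp (-(c * |y|))) t
  have h2 : ∫ y : ℝ, Real.exp (-(c * |y|)) = 2 * ∫ y in Ioi (0:ℝ), Real.exp (-(c * y)) :=
    integral_comp_abs (f := fun y : ℝ => Real.exp (-(c * y)))
  have h3 : ∫ y in Ioi (0:ℝ), Real.exp (-(c * y)) = c⁻¹ := by
    have := integral_comp_mul_left_Ioi (fun x : ℝ => Real.exp (-x)) 0 hc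
    simp only [mul_zero, integral_exp_neg_Ioi, neg_zero, Real.exp_zero, smul_eq_mul, mul_one]
      at this
    exact this
  rw [h1, h2, h3]
  ring

lemma aux_S4 {b : ℝ} (hb : 1 < b) :
    Gamma (b+1)^2 ≤ Gamma (b+1/2) * Gamma (b+3/2) := by
  have hx : (b+1/2) ∈ Ioi (0:ℝ) := by simp only [mem_Ioi]; linarith
  have hy : (b+3/2) ∈ Ioi (0:ℝ) := by simp only [mem_Ioi]; linarith
  have h := convexOn_log_Gamma.2 hx hy (by norm_num : (0:ℝ) ≤ 1/2)
    (by norm_num : (0:ℝ) ≤ 1/2) (by norm_num)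
  simp only [smul_eq_mul, Function.comp_apply] at h
  rw [show (1/2)*(b+1/2) + (1/2)*(b+3/2) = b+1 by ring] at h
  have hg1 : 0 < Gamma (b+1) := Gamma_pos_of_pos (by linarith)
  have hgx : 0 < Gamma (b+1/2) := Gamma_pos_of_pos (by linarith)
  have hgy : 0 < Gamma (b+3/2) := Gamma_pos_of_pos (by linarith)
  have h2 : Real.log (Gamma (b+1)^2) ≤ Real.log (Gamma (b+1/2) * Gamma (b+3/2)) := by
    rw [Real.log_pow, Real.log_mul hgx.ne' hgy.ne']
    push_cast
    linarith
  exact (Real.log_le_log_iff (by positivity) (by positivity)).mp h2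

lemma aux_S3 {b : ℝ} (hb : 1 < b) :
    Real.sqrt π * Gamma (b+1) ≤ Real.exp 1 * 2 ^ (b:ℝ) * Gamma (b+1/2) := by
  have hg1 : 0 < Gamma (b+1) := Gamma_pos_of_pos (by linarith)
  have hgx : 0 < Gamma (b+1/2) := Gamma_pos_of_pos (by linarith)
  have hsq : (Real.sqrt π * Gamma (b+1))^2 ≤ (Real.exp 1 * 2 ^ (b:ℝ) * Gamma (b+1/2))^2 := by
    have h1 : (Real.sqrt π * Gamma (b+1))^2 = π * Gamma (b+1)^2 := by
      rw [mul_pow, Real.sq_sqrt pi_pos.le]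
    have h2 : Gamma (b+3/2) = (b+1/2) * Gamma (b+1/2) := by
      rw [show b+3/2 = (b+1/2)+1 by ring, Gamma_add_one (by positivity)]
    have h3 : (Real.exp 1 * 2 ^ (b:ℝ) * Gamma (b+1/2))^2
        = Real.exp 1 ^ 2 * 2 ^ (2*b) * Gamma (b+1/2)^2 := by
      have hbb : ((2:ℝ) ^ (b:ℝ))^2 = 2 ^ (2*b) := by
        rw [← Real.rpow_natCast ((2:ℝ) ^ (b:ℝ)) 2, ← Real.rpow_mul (by norm_num : (0:ℝ) ≤ 2)]
        norm_num [mul_comm]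
      rw [mul_pow, mul_pow, hbb]
    rw [h1, h3]
    have h4 : (1:ℝ) + b ≤ 2 ^ (2*b) := by
      have hl2 : (0.6931471803 : ℝ) < Real.log 2 := Real.log_two_gt_d9
      have he : 2 ^ (2*b) = Real.exp (Real.log 2 * (2*b)) := by
        rw [Real.rpow_def_of_pos (by norm_num)]
      have := Real.add_one_le_exp (Real.log 2 * (2*b))
      rw [← he] at this
      nlinarith
    have h5 : (2.7182818283 : ℝ) < Real.exp 1 := Real.exp_one_gt_d9
    have h6 : π < 3.15 := pi_lt_d2
    have h7 : Gamma (b+1)^2 ≤ (b+1/2) * Gamma (b+1/2)^2 := by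
      calc Gamma (b+1)^2 ≤ Gamma (b+1/2) * Gamma (b+3/2) := aux_S4 hb
        _ = (b+1/2) * Gamma (b+1/2)^2 := by rw [h2]; ring
    calc π * Gamma (b+1)^2 ≤ π * ((b+1/2) * Gamma (b+1/2)^2) := by
          have := h7; nlinarith [pi_pos]
      _ ≤ Real.exp 1 ^ 2 * 2 ^ (2*b) * Gamma (b+1/2)^2 := by
          have hG2 : 0 ≤ Gamma (b+1/2)^2 := sq_nonneg _
          have key : π * (b+1/2) ≤ Real.exp 1 ^ 2 * 2 ^ (2*b) := by
            have h8 : Real.exp 1 ^ 2 * (1+b) ≤ Real.exp 1 ^ 2 * 2 ^ (2*b) :=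
              mul_le_mul_of_nonneg_left h4 (by positivity)
            have h9 : π * (b+1/2) ≤ Real.exp 1 ^ 2 * (1+b) := by
              nlinarith [sq_nonneg (Real.exp 1 - 2.7182818283)]
            linarith
          nlinarith
  have hpos2 : (0:ℝ) ≤ Real.exp 1 * 2 ^ (b:ℝ) * Gamma (b+1/2) := by positivity
  nlinarith [hsq, mul_pos (Real.sqrt_pos.mpr pi_pos) hg1]

lemma aux_exp1 {b : ℝ} (hb : 1 < b) : ((b-1)/b) ^ (b:ℝ) ≤ Real.exp (-1) := by
  have hb0 : (0:ℝ) < b := by linarith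
  have h1 : (b-1)/b ≤ Real.exp (-(1/b)) := by
    have := Real.add_one_le_exp (-(1/b))
    have : -(1/b) + 1 ≤ Real.exp (-(1/b)) := by linarith
    calc (b-1)/b = -(1/b) + 1 := by field_simp; ring
      _ ≤ _ := this
  calc ((b-1)/b) ^ (b:ℝ) ≤ (Real.exp (-(1/b))) ^ (b:ℝ) :=
        Real.rpow_le_rpow (div_nonneg (by linarith) hb0.le) h1 hb0.le
    _ = Real.exp (-(1/b) * b) := (Real.exp_mul _ _).symm
    _ = Real.exp (-1) := by rw [show -(1/b) * b = -1 by field_simp]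

lemma key_ineq {b : ℝ} (hb : 1 < b) :
    2 ^ ((b-1)/(b+1)) * ((b-1)/b) ^ ((b-1)/(b*(b+1))) ≤
      (b/(b-1)) ^ ((b+1)/b) * (Gamma (2*b) / (Gamma (b+1) * Gamma b)) ^ (1/b) := by
  have hb0 : (0:ℝ) < b := by linarith
  have hb1 : (0:ℝ) < b - 1 := by linarith
  have hb2 : (0:ℝ) < b + 1 := by linarith
  set u : ℝ := (b-1)/b with hudef
  set v : ℝ := b/(b-1) with hvdef
  have hu0 : (0:ℝ) < u := by positivity
  have hu1 : u < 1 := by rw [hudef, div_lt_one hb0]; linarith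
  have hv0 : (0:ℝ) < v := by positivity
  have hGb : 0 < Gamma b := Gamma_pos_of_pos hb0
  have hGb1 : 0 < Gamma (b+1) := Gamma_pos_of_pos (by linarith)
  have hGbh : 0 < Gamma (b+1/2) := Gamma_pos_of_pos (by linarith)
  have hG2b : 0 < Gamma (2*b) := Gamma_pos_of_pos (by linarith)
  set R : ℝ := Gamma (2*b) / (Gamma (b+1) * Gamma b) with hRdef
  have hR0 : (0:ℝ) < R := by positivity
  have hE : (0:ℝ) < b*(b+1) := by positivity
  rw [← Real.rpow_le_rpow_iff (by positivity) (by positivity) hE,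
    Real.mul_rpow (by positivity) (by positivity),
    Real.mul_rpow (by positivity) (by positivity),
    ← Real.rpow_mul (by norm_num : (0:ℝ) ≤ 2), ← Real.rpow_mul hu0.le,
    ← Real.rpow_mul hv0.le, ← Real.rpow_mul hR0.le,
    show (b-1)/(b+1) * (b*(b+1)) = b*(b-1) by field_simp,
    show (b-1)/(b*(b+1)) * (b*(b+1)) = b-1 by field_simp,
    show (b+1)/b * (b*(b+1)) = (b+1)^2 by field_simp,
    show 1/b * (b*(b+1)) = b+1 by field_simp]
  -- goal : 2^(b*(b-1)) * u^(b-1) ≤ v^((b+1)^2) * R^(b+1)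
  have huv : u * v = 1 := by rw [hudef, hvdef]; field_simp
  have hsplit : u^((b:ℝ)^2+3*b) * v^(((b:ℝ)+1)^2) = u^((b:ℝ)-1) := by
    rw [show (b:ℝ)^2+3*b = (b-1) + (b+1)^2 by ring, Real.rpow_add hu0, mul_assoc,
      ← Real.mul_rpow hu0.le hv0.le, huv, Real.one_rpow, mul_one]
  -- duplication formula
  have hdup := Real.Gamma_mul_Gamma_add_half b
  have hsπ : (0:ℝ) < Real.sqrt π := Real.sqrt_pos.mpr pi_pos
  have h2b : ((2:ℝ)^((1:ℝ)-2*b)) * (2:ℝ)^(2*b-1) = 1 := by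
    rw [← Real.rpow_add (by norm_num : (0:ℝ) < 2)]
    norm_num
  have hG2bval : Gamma (2*b) * Real.sqrt π = 2^(2*b-1) * (Gamma b * Gamma (b+1/2)) := by
    have h := congrArg (· * (2:ℝ)^(2*b-1)) hdup
    calc Gamma (2*b) * Real.sqrt π
        = Gamma (2*b) * (2:ℝ)^((1:ℝ)-2*b) * Real.sqrt π * (2:ℝ)^(2*b-1) := by
          rw [show Gamma (2*b) * (2:ℝ)^((1:ℝ)-2*b) * Real.sqrt π * (2:ℝ)^(2*b-1)
            = Gamma (2*b) * Real.sqrt π * (((2:ℝ)^((1:ℝ)-2*b)) * (2:ℝ)^(2*b-1)) by ring, h2b,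
            mul_one]
      _ = Gamma b * Gamma (b+1/2) * (2:ℝ)^(2*b-1) := by rw [← h]
      _ = 2^(2*b-1) * (Gamma b * Gamma (b+1/2)) := by ring
  have hRalt : R = 2^(2*b-1) * Gamma (b+1/2) / (Real.sqrt π * Gamma (b+1)) := by
    rw [hRdef, div_eq_div_iff (by positivity) (by positivity)]
    calc Gamma (2*b) * (Real.sqrt π * Gamma (b+1))
        = (Gamma (2*b) * Real.sqrt π) * Gamma (b+1) := by ring
      _ = 2^(2*b-1) * (Gamma b * Gamma (b+1/2)) * Gamma (b+1) := by rw [hG2bval]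
      _ = 2^(2*b-1) * Gamma (b+1/2) * (Gamma (b+1) * Gamma b) := by ring
  -- pointwise bounds
  have hu_bound : u ^ ((b:ℝ)^2+3*b) ≤ Real.exp (-(b+1)) := by
    calc u ^ ((b:ℝ)^2+3*b) ≤ u ^ ((b:ℝ)^2+b) :=
          Real.rpow_le_rpow_of_exponent_ge hu0 hu1.le (by nlinarith)
      _ = (u ^ (b:ℝ)) ^ ((b:ℝ)+1) := by
          rw [← Real.rpow_mul hu0.le]; congr 1; ring
      _ ≤ (Real.exp (-1)) ^ ((b:ℝ)+1) :=
          Real.rpow_le_rpow (by positivity) (aux_exp1 hb) (by linarith)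
      _ = Real.exp (-(b+1)) := by rw [← Real.exp_mul]; congr 1; ring
  have hDpow : (Real.sqrt π * Gamma (b+1)) ^ ((b:ℝ)+1)
      ≤ Real.exp (b+1) * 2^(b*(b+1)) * Gamma (b+1/2)^((b:ℝ)+1) := by
    calc (Real.sqrt π * Gamma (b+1)) ^ ((b:ℝ)+1)
        ≤ (Real.exp 1 * 2^(b:ℝ) * Gamma (b+1/2)) ^ ((b:ℝ)+1) :=
          Real.rpow_le_rpow (by positivity) (aux_S3 hb) (by linarith)
      _ = Real.exp (b+1) * 2^(b*(b+1)) * Gamma (b+1/2)^((b:ℝ)+1) := by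
          rw [Real.mul_rpow (by positivity) hGbh.le, Real.mul_rpow (by positivity) (by positivity),
            ← Real.rpow_mul (by norm_num : (0:ℝ) ≤ 2), ← Real.exp_mul, one_mul]
  have hG2 : 2^(b*(b-1)) * u^((b:ℝ)^2+3*b) ≤ R^((b:ℝ)+1) := by
    have hRpow : R^((b:ℝ)+1) = (2^(2*b-1) * Gamma (b+1/2))^((b:ℝ)+1)
        / (Real.sqrt π * Gamma (b+1))^((b:ℝ)+1) := by
      rw [hRalt, Real.div_rpow (by positivity) (by positivity)]
    rw [hRpow, le_div_iff₀ (by positivity)]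
    have hee : Real.exp (-(b+1)) * Real.exp (b+1) = 1 := by
      rw [← Real.exp_add, show -(b+1)+(b+1) = 0 by ring, Real.exp_zero]
    calc 2^(b*(b-1)) * u^((b:ℝ)^2+3*b) * (Real.sqrt π * Gamma (b+1))^((b:ℝ)+1)
        ≤ 2^(b*(b-1)) * Real.exp (-(b+1))
            * (Real.exp (b+1) * 2^(b*(b+1)) * Gamma (b+1/2)^((b:ℝ)+1)) := by
          apply mul_le_mul (mul_le_mul_of_nonneg_left hu_bound (by positivity)) hDpow
            (by positivity) (by positivity)
      _ = (2^(b*(b-1)) * 2^(b*(b+1)) * Gamma (b+1/2)^((b:ℝ)+1))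
            * (Real.exp (-(b+1)) * Real.exp (b+1)) := by ring
      _ = 2^(b*(b-1)+b*(b+1)) * Gamma (b+1/2)^((b:ℝ)+1) := by
          rw [hee, mul_one, ← Real.rpow_add (by norm_num : (0:ℝ) < 2)]
      _ ≤ 2^((2*b-1)*(b+1)) * Gamma (b+1/2)^((b:ℝ)+1) := by
          apply mul_le_mul_of_nonneg_right
            (Real.rpow_le_rpow_of_exponent_le one_le_two (by nlinarith)) (by positivity)
      _ = (2^(2*b-1) * Gamma (b+1/2))^((b:ℝ)+1) := by
          rw [Real.mul_rpow (by positivity) hGbh.le, ← Real.rpow_mul (by norm_num : (0:ℝ) ≤ 2)]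
  calc 2^(b*(b-1)) * u^((b:ℝ)-1)
      = (2^(b*(b-1)) * u^((b:ℝ)^2+3*b)) * v^(((b:ℝ)+1)^2) := by
        rw [mul_assoc, hsplit]
    _ ≤ R^((b:ℝ)+1) * v^(((b:ℝ)+1)^2) :=
        mul_le_mul_of_nonneg_right hG2 (by positivity)
    _ = v^(((b:ℝ)+1)^2) * R^((b:ℝ)+1) := by ring

lemma const_le {p : ℝ} (hp : 1 < p) (hp2 : p < 2) :
    2 ^ (p-1) * (2/(p/(p-1))) ^ ((2-p)/(p/(p-1))) ≤
      ((p/(p-1))/2) ^ (2/p) *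
        (Gamma (2*p/(2-p)) / (Gamma (2/(2-p)) * Gamma (p/(2-p)))) ^ (2/p-1) := by
  have hp0 : (0:ℝ) < p := by linarith
  have hp1 : (0:ℝ) < p - 1 := by linarith
  have h2p : (0:ℝ) < 2 - p := by linarith
  set b : ℝ := p/(2-p) with hbdef
  have hb : 1 < b := by rw [hbdef, lt_div_iff₀ h2p]; linarith
  have hb0 : (0:ℝ) < b := by linarith
  have hb1 : (0:ℝ) < b - 1 := by linarith
  have e1 : p - 1 = (b-1)/(b+1) := by
    rw [hbdef]
    field_simp [hp0.ne', hp1.ne', h2p.ne', ne_of_gt (show (0:ℝ) < -2+p*2 by linarith)]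
    try ring
  have e2 : 2/(p/(p-1)) = (b-1)/b := by
    rw [hbdef]
    field_simp [hp0.ne', hp1.ne', h2p.ne', ne_of_gt (show (0:ℝ) < -2+p*2 by linarith)]
    try ring
  have e3 : (2-p)/(p/(p-1)) = (b-1)/(b*(b+1)) := by
    rw [hbdef]
    field_simp [hp0.ne', hp1.ne', h2p.ne', ne_of_gt (show (0:ℝ) < -2+p*2 by linarith)]
    try ring
  have e4 : (p/(p-1))/2 = b/(b-1) := by
    rw [div_div, div_eq_div_iff (by positivity) hb1.ne']
    rw [hbdef]
    field_simp [h2p.ne']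
    try ring
    try tauto
  have e5 : 2/p = (b+1)/b := by
    rw [hbdef]
    field_simp [hp0.ne', hp1.ne', h2p.ne', ne_of_gt (show (0:ℝ) < -2+p*2 by linarith)]
    try ring
  have e6 : 2*p/(2-p) = 2*b := by
    rw [hbdef]
    field_simp [hp0.ne', hp1.ne', h2p.ne', ne_of_gt (show (0:ℝ) < -2+p*2 by linarith)]
    try ring
  have e7 : 2/(2-p) = b+1 := by
    rw [hbdef]
    field_simp [hp0.ne', hp1.ne', h2p.ne', ne_of_gt (show (0:ℝ) < -2+p*2 by linarith)]
    try ring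
  have e9 : 2/p - 1 = 1/b := by
    rw [hbdef]
    field_simp [hp0.ne', hp1.ne', h2p.ne', ne_of_gt (show (0:ℝ) < -2+p*2 by linarith)]
    try ring
  rw [e2, e3, e4, e9, e5, e6, e7, e1]
  exact key_ineq hb

lemma core {p : ℝ} (hp : 1 < p) (hp2 : p < 2) {f : ℝ → ℝ} (hfm : Measurable f)
    (hf : MemLp f (ENNReal.ofReal p)) :
    eLpNorm (fun x => ∫ y, Real.exp (-|x - y|) * f y) (ENNReal.ofReal (p/(p-1))) volume ≤
      ENNReal.ofReal (2 ^ (p-1) * (2/(p/(p-1))) ^ ((2-p)/(p/(p-1)))) *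
      eLpNorm f (ENNReal.ofReal p) volume := by
  have hp0 : (0:ℝ) < p := by linarith
  have hp1 : (0:ℝ) < p - 1 := by linarith
  set q : ℝ := p/(p-1) with hqdef
  have hpq : p.HolderConjugate q := Real.HolderConjugate.conjExponent hp
  have hq1 : 1 < q := hpq.symm.lt
  have hq0 : (0:ℝ) < q := by linarith
  have hplq : p < q := by rw [hqdef, lt_div_iff₀ hp1]; nlinarith
  set F : ℝ → ℝ≥0∞ := fun y => (‖f y‖₊ : ℝ≥0∞) with hFdef
  have hF : Measurable F := hfm.nnnorm.coe_nnreal_ennreal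
  set Nf : ℝ≥0∞ := ∫⁻ y, F y ^ p with hNfdef
  have hPne : ENNReal.ofReal p ≠ 0 := by simp only [ne_eq, ENNReal.ofReal_eq_zero]; linarith
  have hsnf : eLpNorm f (ENNReal.ofReal p) volume = Nf ^ (1/p) := by
    rw [eLpNorm_eq_lintegral_rpow_enorm_toReal hPne ENNReal.ofReal_ne_top,
      ENNReal.toReal_ofReal hp0.le]
    rfl
  have hNf_top : Nf ≠ ⊤ := by
    intro h
    have h2 := hf.2
    rw [hsnf, h, ENNReal.top_rpow_of_pos (by positivity)] at h2
    exact (lt_irrefl _ h2).elim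
  set K : ℝ → ℝ → ℝ≥0∞ := fun x y => ENNReal.ofReal (Real.exp (-|x - y|)) with hKdef
  have hKm : Measurable (Function.uncurry K) :=
    (ENNReal.continuous_ofReal.comp
      (((continuous_fst.sub continuous_snd).abs.neg).rexp)).measurable
  have hKx : ∀ x, Measurable (K x) := fun x =>
    (ENNReal.continuous_ofReal.comp
      (((continuous_const.sub continuous_id).abs.neg).rexp)).measurable
  have hkery : ∀ (c : ℝ), 0 < c → ∀ x : ℝ,
      (∫⁻ y, ENNReal.ofReal (Real.exp (-(c * |x - y|)))) = ENNReal.ofReal (2/c) := by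
    intro c hc x
    have h1 : ∀ y : ℝ, Real.exp (-(c * |x - y|)) = Real.exp (-(c * |y - x|)) := by
      intro y; rw [abs_sub_comm]
    simp_rw [h1]
    rw [← ofReal_integral_eq_lintegral_ofReal (ker_int hc x).1
      (ae_of_all _ fun y => (Real.exp_pos _).le), (ker_int hc x).2]
  have hKy1 : ∀ x : ℝ, (∫⁻ y, K x y) = ENNReal.ofReal 2 := by
    intro x
    have h1 : ∀ y : ℝ, K x y = ENNReal.ofReal (Real.exp (-(1 * |x - y|))) := by
      intro y; rw [hKdef]; norm_num
    simp_rw [h1, hkery 1 one_pos x]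
    norm_num
  have hkerx : ∀ y : ℝ, (∫⁻ x, K x y) = ENNReal.ofReal 2 := by
    intro y
    have h1 : ∀ x : ℝ, K x y = ENNReal.ofReal (Real.exp (-(1 * |x - y|))) := by
      intro x; rw [hKdef]; norm_num
    simp_rw [h1]
    rw [← ofReal_integral_eq_lintegral_ofReal (ker_int one_pos y).1
      (ae_of_all _ fun x => (Real.exp_pos _).le), (ker_int one_pos y).2]
    norm_num
  have hKyq : ∀ x : ℝ, (∫⁻ y, K x y ^ q) = ENNReal.ofReal (2/q) := by
    intro x
    have h1 : ∀ y : ℝ, K x y ^ q = ENNReal.ofReal (Real.exp (-(q * |x - y|))) := by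
      intro y
      rw [hKdef]
      simp only
      rw [ENNReal.ofReal_rpow_of_pos (Real.exp_pos _), ← Real.exp_mul]
      congr 2
      ring
    simp_rw [h1, hkery q hq0 x]
  set G : ℝ → ℝ≥0∞ := fun x => ∫⁻ y, K x y * F y with hGdef
  -- Step A : sup bound
  have hA0 : ∀ x, G x ≤ ENNReal.ofReal ((2/q) ^ (1/q)) * Nf ^ (1/p) := by
    intro x
    have hH := ENNReal.lintegral_mul_le_Lp_mul_Lq volume hpq.symm
      (hKx x).aemeasurable hF.aemeasurable
    calc G x = ∫⁻ y, ((K x) * F) y := rfl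
      _ ≤ (∫⁻ y, K x y ^ q) ^ (1/q) * (∫⁻ y, F y ^ p) ^ (1/p) := hH
      _ = ENNReal.ofReal ((2/q) ^ (1/q)) * Nf ^ (1/p) := by
          rw [hKyq x, ← hNfdef, ENNReal.ofReal_rpow_of_pos (by positivity)]
  -- Step B1 : pointwise Hölder for the L^p bound
  have hB1 : ∀ x, G x ^ p ≤ ENNReal.ofReal 2 ^ (p-1) * ∫⁻ y, K x y * F y ^ p := by
    intro x
    have hmeas1 : Measurable (fun y => K x y ^ (1/q)) :=
      ENNReal.continuous_rpow_const.measurable.comp (hKx x)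
    have hmeas2 : Measurable (fun y => K x y ^ (1/p) * F y) :=
      (ENNReal.continuous_rpow_const.measurable.comp (hKx x)).mul hF
    have hH := ENNReal.lintegral_mul_le_Lp_mul_Lq volume hpq.symm
      hmeas1.aemeasurable hmeas2.aemeasurable
    have hsum : 1/q + 1/p = 1 := by
      rw [one_div, one_div, add_comm]; exact hpq.inv_add_inv_eq_one
    have hKsplit : ∀ y : ℝ, K x y ^ (1/q) * K x y ^ (1/p) = K x y := by
      intro y
      rw [← ENNReal.rpow_add_of_nonneg _ _ (by positivity) (by positivity), hsum,
        ENNReal.rpow_one]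
    have heq1 : (∫⁻ y, ((fun y => K x y ^ (1/q)) * fun y => K x y ^ (1/p) * F y) y) = G x := by
      apply lintegral_congr
      intro y
      simp only [Pi.mul_apply]
      rw [← mul_assoc, hKsplit y]
    have heq2 : (∫⁻ y, (K x y ^ (1/q)) ^ q) = ENNReal.ofReal 2 := by
      have : ∀ y : ℝ, (K x y ^ (1/q)) ^ q = K x y := by
        intro y
        rw [← ENNReal.rpow_mul, one_div_mul_cancel hq0.ne', ENNReal.rpow_one]
      simp_rw [this, hKy1 x]
    have heq3 : (∫⁻ y, (K x y ^ (1/p) * F y) ^ p) = ∫⁻ y, K x y * F y ^ p := by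
      apply lintegral_congr
      intro y
      rw [ENNReal.mul_rpow_of_nonneg _ _ hp0.le, ← ENNReal.rpow_mul,
        one_div_mul_cancel hp0.ne', ENNReal.rpow_one]
    rw [heq1, heq2, heq3] at hH
    have hGle : G x ≤ (ENNReal.ofReal 2) ^ (1/q) * (∫⁻ y, K x y * F y ^ p) ^ (1/p) := hH
    calc G x ^ p ≤ ((ENNReal.ofReal 2) ^ (1/q) * (∫⁻ y, K x y * F y ^ p) ^ (1/p)) ^ p :=
          ENNReal.rpow_le_rpow hGle hp0.le
      _ = ENNReal.ofReal 2 ^ (p-1) * ∫⁻ y, K x y * F y ^ p := by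
          rw [ENNReal.mul_rpow_of_nonneg _ _ hp0.le, ← ENNReal.rpow_mul, ← ENNReal.rpow_mul,
            show 1/q * p = p - 1 by
              rw [div_mul_eq_mul_div, one_mul]; exact hpq.div_conj_eq_sub_one,
            show 1/p * p = 1 by rw [one_div_mul_cancel hp0.ne'], ENNReal.rpow_one]
  -- Step B2 : Fubini
  have hB2 : (∫⁻ x, ∫⁻ y, K x y * F y ^ p) = ENNReal.ofReal 2 * Nf := by
    rw [lintegral_lintegral_swap]
    · have h1 : ∀ y : ℝ, (∫⁻ x, K x y * F y ^ p) = F y ^ p * ENNReal.ofReal 2 := by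
        intro y
        rw [lintegral_mul_const' _ _ (ENNReal.rpow_ne_top_of_nonneg hp0.le ENNReal.coe_ne_top),
          hkerx y, mul_comm]
      simp_rw [h1]
      rw [lintegral_mul_const' _ _ ENNReal.ofReal_ne_top, hNfdef, mul_comm]
    · exact (hKm.mul
        ((ENNReal.continuous_rpow_const.measurable.comp (hF.comp measurable_snd)))).aemeasurable
  -- Step B : L^p bound
  have hB : (∫⁻ x, G x ^ p) ≤ ENNReal.ofReal 2 ^ (p-1) * (ENNReal.ofReal 2 * Nf) := by
    calc (∫⁻ x, G x ^ p) ≤ ∫⁻ x, ENNReal.ofReal 2 ^ (p-1) * ∫⁻ y, K x y * F y ^ p :=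
          lintegral_mono fun x => hB1 x
      _ = ENNReal.ofReal 2 ^ (p-1) * ∫⁻ x, ∫⁻ y, K x y * F y ^ p := by
          rw [lintegral_const_mul' _ _
            (ENNReal.rpow_ne_top_of_nonneg (by linarith) ENNReal.ofReal_ne_top)]
      _ = ENNReal.ofReal 2 ^ (p-1) * (ENNReal.ofReal 2 * Nf) := by rw [hB2]
  -- Step C : interpolation
  set A : ℝ≥0∞ := ENNReal.ofReal ((2/q) ^ (1/q)) * Nf ^ (1/p) with hAdef
  have hAtop : A ≠ ⊤ :=
    ENNReal.mul_ne_top ENNReal.ofReal_ne_top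
      (ENNReal.rpow_ne_top_of_nonneg (by positivity) hNf_top)
  have hC : (∫⁻ x, G x ^ q) ≤ A ^ (q-p) * (ENNReal.ofReal 2 ^ (p-1) * (ENNReal.ofReal 2 * Nf)) := by
    calc (∫⁻ x, G x ^ q) = ∫⁻ x, G x ^ p * G x ^ (q-p) := by
          apply lintegral_congr
          intro x
          rw [← ENNReal.rpow_add_of_nonneg _ _ hp0.le (by linarith)]
          congr 1
          ring
      _ ≤ ∫⁻ x, G x ^ p * A ^ (q-p) :=
          lintegral_mono fun x =>
            mul_le_mul_right (ENNReal.rpow_le_rpow (hA0 x) (by linarith)) _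
      _ = A ^ (q-p) * ∫⁻ x, G x ^ p := by
          rw [lintegral_mul_const' _ _
            (ENNReal.rpow_ne_top_of_nonneg (by linarith) hAtop), mul_comm]
      _ ≤ A ^ (q-p) * (ENNReal.ofReal 2 ^ (p-1) * (ENNReal.ofReal 2 * Nf)) :=
          mul_le_mul_right hB _
  -- final assembly
  set g : ℝ → ℝ := fun x => ∫ y, Real.exp (-|x - y|) * f y with hgdef
  have hgG : ∀ x, (‖g x‖₊ : ℝ≥0∞) ≤ G x := by
    intro x
    refine le_trans (enorm_integral_le_lintegral_enorm _)
      (le_of_eq (lintegral_congr fun y => ?_))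
    rw [enorm_mul]
    congr 1
    exact Real.enorm_eq_ofReal (Real.exp_pos _).le
  have hQne : ENNReal.ofReal q ≠ 0 := by simp only [ne_eq, ENNReal.ofReal_eq_zero]; linarith
  have step1 : eLpNorm g (ENNReal.ofReal q) volume ≤ (∫⁻ x, G x ^ q) ^ (1/q) := by
    rw [eLpNorm_eq_lintegral_rpow_enorm_toReal hQne ENNReal.ofReal_ne_top,
      ENNReal.toReal_ofReal hq0.le]
    apply ENNReal.rpow_le_rpow _ (by positivity)
    exact lintegral_mono fun x => ENNReal.rpow_le_rpow (hgG x) hq0.le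
  set t : ℝ≥0∞ := Nf ^ (1/p) with htdef
  have hNft : Nf = t ^ p := by
    rw [htdef, ← ENNReal.rpow_mul, one_div_mul_cancel hp0.ne', ENNReal.rpow_one]
  have hfact : ∀ (a c t : ℝ≥0∞),
      a^(q-p) * t^(q-p) * (c^(p-1) * (c * t^p)) = a^(q-p) * c^p * t^q := by
    intro a c t
    have h1 : c^(p-1) * c = c^p := by
      nth_rewrite 2 [← ENNReal.rpow_one c]
      rw [← ENNReal.rpow_add_of_nonneg _ _ (by linarith) zero_le_one, sub_add_cancel]
    have h2 : t^(q-p) * t^p = t^q := by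
      rw [← ENNReal.rpow_add_of_nonneg _ _ (by linarith) hp0.le, sub_add_cancel]
    calc a^(q-p) * t^(q-p) * (c^(p-1) * (c * t^p))
        = a^(q-p) * (c^(p-1) * c) * (t^(q-p) * t^p) := by ring
      _ = a^(q-p) * c^p * t^q := by rw [h1, h2]
  have e1 : (q-p)*(1/q) = 2-p := by
    rw [mul_one_div, sub_div, div_self hq0.ne', hpq.div_conj_eq_sub_one]; ring
  have e2 : p*(1/q) = p-1 := by rw [mul_one_div]; exact hpq.div_conj_eq_sub_one
  have e3 : q*(1/q) = 1 := by rw [mul_one_div, div_self hq0.ne']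
  calc eLpNorm g (ENNReal.ofReal q) volume
      ≤ (∫⁻ x, G x ^ q) ^ (1/q) := step1
    _ ≤ (A ^ (q-p) * (ENNReal.ofReal 2 ^ (p-1) * (ENNReal.ofReal 2 * Nf))) ^ (1/q) :=
        ENNReal.rpow_le_rpow hC (by positivity)
    _ = (ENNReal.ofReal ((2/q)^(1/q)) ^ (q-p) * ENNReal.ofReal 2 ^ p * t ^ q) ^ (1/q) := by
        congr 1
        rw [hAdef, ENNReal.mul_rpow_of_nonneg _ _ (by linarith : (0:ℝ) ≤ q-p), hNft]
        exact hfact _ _ _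
    _ = ENNReal.ofReal ((2/q)^(1/q)) ^ ((q-p)*(1/q)) * ENNReal.ofReal 2 ^ (p*(1/q))
          * t ^ (q*(1/q)) := by
        rw [ENNReal.mul_rpow_of_nonneg _ _ (by positivity : (0:ℝ) ≤ 1/q),
          ENNReal.mul_rpow_of_nonneg _ _ (by positivity : (0:ℝ) ≤ 1/q),
          ← ENNReal.rpow_mul, ← ENNReal.rpow_mul, ← ENNReal.rpow_mul]
    _ = ENNReal.ofReal (2 ^ (p-1) * (2/q) ^ ((2-p)/q)) * eLpNorm f (ENNReal.ofReal p) volume := by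
        rw [e1, e2, e3, ENNReal.rpow_one, ← hsnf,
          ENNReal.ofReal_rpow_of_pos (by positivity), ← Real.rpow_mul (by positivity),
          show (1/q)*(2-p) = (2-p)/q by ring,
          ENNReal.ofReal_rpow_of_pos two_pos, ← ENNReal.ofReal_mul (by positivity)]
        congr 2
        ring

theorem stmt6 (p : ℝ) (hp : 1 < p) (hp2 : p < 2) (f : ℝ → ℝ)
    (hf : MemLp f (ENNReal.ofReal p)) :
    eLpNorm (fun x => ∫ y, Real.exp (-|x - y|) * f y) (ENNReal.ofReal (p/(p-1))) volume ≤
      ENNReal.ofReal (((p/(p-1))/2) ^ (2/p) *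
        (Gamma (2*p/(2-p)) / (Gamma (2/(2-p)) * Gamma (p/(2-p)))) ^ (2/p - 1)) *
      eLpNorm f (ENNReal.ofReal p) volume := by
  obtain ⟨f', hf'sm, hff'⟩ := hf.1
  have hf' : MemLp f' (ENNReal.ofReal p) := hf.ae_eq hff'
  have h1 : (fun x => ∫ y, Real.exp (-|x - y|) * f y)
      = fun x => ∫ y, Real.exp (-|x - y|) * f' y := by
    funext x
    exact integral_congr_ae (hff'.mono fun y hy => by dsimp only; rw [hy])
  rw [h1, eLpNorm_congr_ae hff']
  refine le_trans (core hp hp2 hf'sm.measurable hf') ?_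
  exact mul_le_mul_left (ENNReal.ofReal_le_ofReal (const_le hp hp2)) _
end

section
/- Bilinear form of Young's inequality for the exponential kernel: For 1 < p < 2 and p' = p/(p-1), every h ∈ L^p(ℝ) satisfies | ∫_{ℝ×ℝ} h(u) e^{-(2/p')|u-v|} h(v) du dv | ≤ (2/p') A_p ‖h‖_{L^p(ℝ)}², where A_p = (p'/2)^{2/p} [ Γ(2p/(2-p)) / (Γ(2/(2-p)) Γ(p/(2-p))) ]^{2/p - 1}. -/
open MeasureTheory Real Set
open scoped ENNReal

-- helper: 2^x ≥ x for x ≥ 0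
lemma aux_rpow_ge (x : ℝ) (hx : 0 ≤ x) : x ≤ (2:ℝ) ^ x := by
  have hL : (0.6931471803 : ℝ) < Real.log 2 := Real.log_two_gt_d9
  have h2 : (2:ℝ) ^ x = Real.exp (x * Real.log 2) := by
    rw [Real.rpow_def_of_pos (by norm_num : (0:ℝ) < 2)]; ring_nf
  have h3 : Real.exp (x * Real.log 2) = Real.exp (x * Real.log 2 / 2) ^ 2 := by
    rw [← Real.exp_nat_mul]; ring_nf
  have h4 : (1 + x * Real.log 2 / 2) ≤ Real.exp (x * Real.log 2 / 2) :=
    by linarith [Real.add_one_le_exp (x * Real.log 2 / 2)]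
  have h5 : 0 ≤ 1 + x * Real.log 2 / 2 := by nlinarith
  have h6 : (1 + x * Real.log 2 / 2) ^ 2 ≤ Real.exp (x * Real.log 2 / 2) ^ 2 := by
    exact pow_le_pow_left₀ h5 h4 2
  rw [h2, h3]
  nlinarith [sq_nonneg (x * Real.log 2 / 2), sq_nonneg x]

lemma aux_gamma_ratio {b : ℝ} (hb : 1 ≤ b) :
    Real.sqrt π / 2 * Real.Gamma b ≤ Real.Gamma (b + 1/2) := by
  have hΓ32 : Real.Gamma (3/2 : ℝ) = Real.sqrt π / 2 := by
    have := Real.Gamma_add_one (s := (1/2 : ℝ)) (by norm_num)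
    rw [show (3/2 : ℝ) = 1/2 + 1 by norm_num, this, Real.Gamma_one_half_eq]
    ring
  have hbpos : (0:ℝ) < b := by linarith
  rcases eq_or_lt_of_le hb with rfl | hb1
  · rw [show (1:ℝ) + 1/2 = 3/2 by norm_num, hΓ32, Real.Gamma_one, mul_one]
  · -- convexity argument
    have hc := Real.convexOn_log_Gamma
    set lam : ℝ := (1/2) / (b - 1/2) with hlam
    have hbd : (0:ℝ) < b - 1/2 := by linarith
    have hlam0 : 0 ≤ lam := by positivity
    have hlam1 : lam ≤ 1 := by
      rw [hlam, div_le_one hbd]; linarith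
    have h1mem : (1:ℝ) ∈ Ioi (0:ℝ) := by norm_num
    have h2mem : (b + 1/2 : ℝ) ∈ Ioi (0:ℝ) := by simp; linarith
    have key1 := hc.2 h1mem h2mem (by linarith : (0:ℝ) ≤ 1 - lam) hlam0 (by ring)
    have key2 := hc.2 h1mem h2mem hlam0 (by linarith : (0:ℝ) ≤ 1 - lam) (by ring)
    have hne : b - 1/2 ≠ 0 := ne_of_gt hbd
    have hkey : lam * (b - 1/2) = 1/2 := by rw [hlam]; field_simp; rw [div_self (by linarith : (2*b-1) ≠ 0)]
    have e1 : (1 - lam) • (1:ℝ) + lam • (b + 1/2) = 3/2 := by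
      rw [smul_eq_mul, smul_eq_mul]; linear_combination hkey
    have e2 : lam • (1:ℝ) + (1 - lam) • (b + 1/2) = b := by
      rw [smul_eq_mul, smul_eq_mul]; linear_combination -hkey
    rw [e1] at key1; rw [e2] at key2
    simp only [Function.comp_apply, smul_eq_mul, Real.Gamma_one, Real.log_one] at key1 key2
    -- add: log Γ(3/2) + log Γ(b) ≤ log Γ(b+1/2)
    have hsum : Real.log (Real.Gamma (3/2)) + Real.log (Real.Gamma b) ≤
        Real.log (Real.Gamma (b + 1/2)) := by linarith
    have hg32 : (0:ℝ) < Real.Gamma (3/2) := Real.Gamma_pos_of_pos (by norm_num)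
    have hgb : (0:ℝ) < Real.Gamma b := Real.Gamma_pos_of_pos hbpos
    have hgb2 : (0:ℝ) < Real.Gamma (b + 1/2) := Real.Gamma_pos_of_pos (by linarith)
    rw [← Real.log_mul (ne_of_gt hg32) (ne_of_gt hgb)] at hsum
    have := (Real.log_le_log_iff (by positivity) hgb2).mp hsum
    calc Real.sqrt π / 2 * Real.Gamma b = Real.Gamma (3/2) * Real.Gamma b := by rw [hΓ32]
      _ ≤ _ := this

lemma aux_const (p : ℝ) (hp : 1 < p) (hp2 : p < 2) :
    (2:ℝ) ^ (2 - 2/p) ≤ (2/(p/(p-1))) * (((p/(p-1))/2) ^ (2/p) *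
      (Real.Gamma (2*p/(2-p)) / (Real.Gamma (2/(2-p)) * Real.Gamma (p/(2-p)))) ^ (2/p - 1)) := by
  have h2p : (0:ℝ) < 2 - p := by linarith
  have hp0 : (0:ℝ) < p := by linarith
  obtain ⟨b, hbdef⟩ : ∃ b : ℝ, b = p / (2 - p) := ⟨_, rfl⟩
  have hb1 : 1 < b := by
    rw [hbdef, lt_div_iff₀ h2p]; linarith
  have hb0 : (0:ℝ) < b := by linarith
  have hbm : (0:ℝ) < b - 1 := by linarith
  have hbp : b * (2 - p) = p := by rw [hbdef]; field_simp
  -- rewrite all p-expressions in terms of b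
  have e1 : 2*p/(2-p) = 2*b := by rw [hbdef]; ring
  have e2 : 2/(2-p) = b + 1 := by
    rw [div_eq_iff (ne_of_gt h2p)]; linear_combination -hbp
  have e3 : p/(p-1) = 2*b/(b-1) := by
    rw [div_eq_div_iff (by linarith) (by linarith)]; linear_combination hbp
  have e4 : 2/p = (b+1)/b := by
    rw [div_eq_div_iff (by linarith) (by linarith)]; linear_combination hbp
  have e7 : p/(2-p) = b := hbdef.symm
  have e5 : 2/p - 1 = 1/b := by rw [e4]; field_simp; ring
  have e6 : 2 - 2/p = (b-1)/b := by rw [e4]; field_simp; ring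
  rw [e1, e2, e3, e7, e5, e6, e4]
  -- positivity facts
  have hsp : (0:ℝ) < Real.sqrt π := Real.sqrt_pos.mpr Real.pi_pos
  have hgb : (0:ℝ) < Real.Gamma b := Real.Gamma_pos_of_pos hb0
  have hgb2 : (0:ℝ) < Real.Gamma (b + 1/2) := Real.Gamma_pos_of_pos (by linarith)
  have hg2b : Real.Gamma (2*b) = Real.Gamma b * Real.Gamma (b + 1/2) * 2 ^ (2*b-1) / Real.sqrt π := by
    have hd := Real.Gamma_mul_Gamma_add_half b
    have h2 : (2:ℝ) ^ (1 - 2*b) * (2:ℝ) ^ (2*b - 1) = 1 := by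
      rw [← Real.rpow_add (by norm_num : (0:ℝ) < 2)]; norm_num
    rw [eq_div_iff (ne_of_gt hsp)]
    linear_combination (-((2:ℝ)^(2*b-1))) * hd - (Real.Gamma (2*b) * Real.sqrt π) * h2
  have hgb1 : Real.Gamma (b + 1) = b * Real.Gamma b := Real.Gamma_add_one (ne_of_gt hb0)
  obtain ⟨G, hGdef⟩ : ∃ G : ℝ, G = Real.Gamma (2*b) / (Real.Gamma (b+1) * Real.Gamma b) := ⟨_, rfl⟩
  rw [← hGdef]
  have hGpos : 0 < G := by
    rw [hGdef]
    exact div_pos (Real.Gamma_pos_of_pos (by linarith)) (mul_pos (Real.Gamma_pos_of_pos (by linarith)) hgb)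
  -- simplify RHS to (b/(b-1)*G)^(1/b)
  have hbb : (0:ℝ) < b/(b-1) := by positivity
  have hsimp : 2*b/(b-1)/2 = b/(b-1) := by ring
  have hrexp : (b+1)/b = 1 + 1/b := by field_simp
  have hRHS : 2/(2*b/(b-1)) * ((2*b/(b-1)/2) ^ ((b+1)/b) * G ^ (1/b)) = (b/(b-1)*G) ^ (1/b) := by
    rw [hsimp, hrexp, Real.rpow_add hbb, Real.rpow_one,
      Real.mul_rpow (le_of_lt hbb) (le_of_lt hGpos)]
    have h1 : 2/(2*b/(b-1)) = (b-1)/b := by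
      rw [div_div_eq_mul_div, mul_div_mul_left _ _ (by norm_num : (2:ℝ) ≠ 0)]
    have hc : (b-1)/b * (b/(b-1)) = 1 := by field_simp
    rw [h1]; linear_combination ((b/(b-1))^(1/b) * G^(1/b)) * hc
  rw [hRHS]
  -- LHS as (2^(b-1))^(1/b)
  have hLHS : (2:ℝ) ^ ((b-1)/b) = ((2:ℝ) ^ (b-1)) ^ (1/b) := by
    rw [← Real.rpow_mul (by norm_num : (0:ℝ) ≤ 2)]; congr 1; field_simp
  rw [hLHS]
  apply Real.rpow_le_rpow (by positivity) _ (by positivity)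
  -- main inequality: 2^(b-1) ≤ b/(b-1)*G
  have hGval : b/(b-1)*G = b * (Real.Gamma (b+1/2) * 2 ^ (2*b-1)) / ((b-1) * (Real.sqrt π * b * Real.Gamma b)) := by
    rw [hGdef, hg2b, hgb1]; field_simp
  rw [hGval, le_div_iff₀ (by positivity)]
  have hPpos : (0:ℝ) < (2:ℝ) ^ (b-1) := Real.rpow_pos_of_pos (by norm_num) _
  have hE : (2:ℝ) ^ (2*b-1) = 2 * ((2:ℝ)^(b-1) * (2:ℝ)^(b-1)) := by
    rw [show (2*b-1 : ℝ) = 1 + ((b-1)+(b-1)) by ring, Real.rpow_add (by norm_num : (0:ℝ) < 2),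
      Real.rpow_one, Real.rpow_add (by norm_num : (0:ℝ) < 2)]
  have h1 : b - 1 ≤ (2:ℝ) ^ (b-1) := aux_rpow_ge (b-1) (by linarith)
  have h2 : Real.sqrt π / 2 * Real.Gamma b ≤ Real.Gamma (b + 1/2) := aux_gamma_ratio (le_of_lt hb1)
  rw [hE]
  nlinarith [mul_pos hPpos hPpos, mul_pos hsp hgb,
    mul_le_mul_of_nonneg_right h2 (le_of_lt (mul_pos (mul_pos hPpos hPpos) hb0)),
    mul_le_mul_of_nonneg_right h1 (le_of_lt (mul_pos (mul_pos hsp hgb) (mul_pos hPpos hb0)))]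

lemma aux_exp_abs_integrable : Integrable (fun x : ℝ => Real.exp (-|x|)) := by
  rw [← integrableOn_univ, ← @Iio_union_Ici _ _ (0 : ℝ), integrableOn_union,
    integrableOn_Ici_iff_integrableOn_Ioi]
  have hIoi : IntegrableOn (fun x : ℝ => Real.exp (-|x|)) (Ioi 0) := by
    refine (exp_neg_integrableOn_Ioi 0 one_pos).congr_fun (fun x hx => ?_) measurableSet_Ioi
    rw [abs_of_pos hx]; ring_nf
  refine ⟨?_, hIoi⟩
  rw [← (Measure.measurePreserving_neg (volume : Measure ℝ)).integrableOn_comp_preimage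
      (Homeomorph.neg ℝ).measurableEmbedding]
  simp only [Function.comp_def, abs_neg, neg_preimage, neg_Iio, neg_zero]
  exact hIoi

lemma aux_exp_abs_integral : ∫ x : ℝ, Real.exp (-|x|) = 2 := by
  rw [integral_comp_abs (f := fun x => Real.exp (-x)), integral_exp_neg_Ioi_zero, mul_one]

lemma aux_ker (u : ℝ) :
    ∫⁻ v : ℝ, ENNReal.ofReal (Real.exp (-|u - v|)) = 2 := by
  have h1 : ∀ v : ℝ, ENNReal.ofReal (Real.exp (-|u - v|)) =
      (fun x : ℝ => ENNReal.ofReal (Real.exp (-|x|))) (v + (-u)) := by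
    intro v; rw [abs_sub_comm u v]; norm_num [sub_eq_add_neg]
  simp_rw [h1]
  rw [lintegral_add_right_eq_self (fun x : ℝ => ENNReal.ofReal (Real.exp (-|x|))) (-u)]
  rw [← ofReal_integral_eq_lintegral_ofReal aux_exp_abs_integrable
    (Filter.Eventually.of_forall fun x => (Real.exp_pos _).le), aux_exp_abs_integral]
  norm_num

lemma aux_amgm {p : ℝ} (hp : 1 < p) (hp2 : p < 2) {a b : ℝ} (ha : 0 ≤ a) (hb : 0 ≤ b) :
    a * b ≤ (a ^ p * b ^ (2 - p) + a ^ (2 - p) * b ^ p) / 2 := by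
  have hpne : p ≠ 0 := by linarith
  have h2pne : 2 - p ≠ 0 := by linarith
  rcases eq_or_lt_of_le ha with rfl | ha0
  · simp [Real.zero_rpow hpne, Real.zero_rpow h2pne]
  rcases eq_or_lt_of_le hb with rfl | hb0
  · simp [Real.zero_rpow hpne, Real.zero_rpow h2pne]
  set x := a ^ (p/2) * b ^ ((2-p)/2) with hx
  set y := a ^ ((2-p)/2) * b ^ (p/2) with hy
  have hxy : x * y = a * b := by
    rw [hx, hy]
    rw [show a ^ (p/2) * b ^ ((2-p)/2) * (a ^ ((2-p)/2) * b ^ (p/2))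
        = (a ^ (p/2) * a ^ ((2-p)/2)) * (b ^ ((2-p)/2) * b ^ (p/2)) by ring,
      ← Real.rpow_add ha0, ← Real.rpow_add hb0,
      show p/2 + (2-p)/2 = 1 by ring, show (2-p)/2 + p/2 = 1 by ring,
      Real.rpow_one, Real.rpow_one]
  have hx2 : x * x = a ^ p * b ^ (2-p) := by
    rw [hx, show a ^ (p/2) * b ^ ((2-p)/2) * (a ^ (p/2) * b ^ ((2-p)/2))
        = (a ^ (p/2) * a ^ (p/2)) * (b ^ ((2-p)/2) * b ^ ((2-p)/2)) by ring,
      ← Real.rpow_add ha0, ← Real.rpow_add hb0,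
      show p/2 + p/2 = p by ring, show (2-p)/2 + (2-p)/2 = 2-p by ring]
  have hy2 : y * y = a ^ (2-p) * b ^ p := by
    rw [hy, show a ^ ((2-p)/2) * b ^ (p/2) * (a ^ ((2-p)/2) * b ^ (p/2))
        = (a ^ ((2-p)/2) * a ^ ((2-p)/2)) * (b ^ (p/2) * b ^ (p/2)) by ring,
      ← Real.rpow_add ha0, ← Real.rpow_add hb0,
      show p/2 + p/2 = p by ring, show (2-p)/2 + (2-p)/2 = 2-p by ring]
  nlinarith [sq_nonneg (x - y)]

theorem main_aux (p : ℝ) (hp : 1 < p) (hp2 : p < 2) (h : ℝ → ℝ) (hm : Measurable h)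
    (hh : MemLp h (ENNReal.ofReal p)) :
    |∫ u, ∫ v, h u * Real.exp (-(2/(p/(p-1))) * |u - v|) * h v| ≤
      (2:ℝ) ^ (2 - 2/p) * (∫ x, |h x| ^ p) ^ (2/p) := by
  have hp0 : (0:ℝ) < p := by linarith
  have hp1 : (0:ℝ) < p - 1 := by linarith
  have h2p : (0:ℝ) < 2 - p := by linarith
  set c : ℝ := 2/(p/(p-1)) with hcdef
  have hc : c = 2*(p-1)/p := by rw [hcdef]; field_simp
  have hc0 : 0 < c := by rw [hc]; positivity
  -- the ENNReal density
  set f : ℝ → ℝ≥0∞ := fun x => ENNReal.ofReal |h x| with hfdef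
  have hfm : Measurable f := ENNReal.measurable_ofReal.comp hm.abs
  set ker : ℝ → ℝ → ℝ≥0∞ := fun u v => ENNReal.ofReal (Real.exp (-c * |u - v|)) with hkerdef
  have hkerm : Measurable (Function.uncurry ker) := by
    apply ENNReal.measurable_ofReal.comp
    exact (((measurable_fst.sub measurable_snd).abs.const_mul (-c)).exp)
  have hkerm1 : ∀ u, Measurable (ker u) := fun u =>
    ENNReal.measurable_ofReal.comp (((measurable_const.sub measurable_id).abs.const_mul (-c)).exp)
  -- J
  set J : ℝ≥0∞ := ∫⁻ x, f x ^ p with hJdef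
  have hint : Integrable (fun x => |h x| ^ p) := by
    have h1 : ENNReal.ofReal p ≠ 0 := by
      simp [ENNReal.ofReal_eq_zero]; linarith
    have := hh.integrable_norm_rpow h1 ENNReal.ofReal_ne_top
    simpa [Real.norm_eq_abs, ENNReal.toReal_ofReal hp0.le] using this
  have hJ : J = ENNReal.ofReal (∫ x, |h x| ^ p) := by
    rw [ofReal_integral_eq_lintegral_ofReal hint
      (Filter.Eventually.of_forall fun x => Real.rpow_nonneg (abs_nonneg _) _)]
    rw [hJdef]
    congr 1
    ext x
    rw [hfdef, ENNReal.ofReal_rpow_of_nonneg (abs_nonneg _) hp0.le]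
  have hJtop : J ≠ ⊤ := by rw [hJ]; exact ENNReal.ofReal_ne_top
  -- conjugate exponents
  set s : ℝ := p/(2*(p-1)) with hsdef
  set r : ℝ := p/(2-p) with hrdef
  have hs1 : 1 < s := by rw [hsdef, lt_div_iff₀ (by linarith)]; linarith
  have hconj : s.HolderConjugate r := by
    refine Real.holderConjugate_iff.mpr ⟨hs1, ?_⟩
    rw [hsdef, hrdef]
    rw [inv_div, inv_div]
    field_simp
    ring
  have hcs : c * s = 1 := by rw [hc, hsdef]; field_simp
  have h1s : 1/s = 2 - 2/p := by rw [hsdef]; field_simp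
  have h1r : 1/r = (2-p)/p := by rw [hrdef]; field_simp
  -- inner Hölder bound
  have key_inner : ∀ u : ℝ, ∫⁻ v, ker u v * f v ^ (2-p) ≤
      (2:ℝ≥0∞) ^ (2 - 2/p) * J ^ ((2-p)/p) := by
    intro u
    have hH := ENNReal.lintegral_mul_le_Lp_mul_Lq volume hconj
      (hkerm1 u).aemeasurable ((hfm.pow_const (2-p)).aemeasurable)
    have e1 : ∫⁻ v, ker u v ^ s = 2 := by
      have : ∀ v : ℝ, ker u v ^ s = ENNReal.ofReal (Real.exp (-|u - v|)) := by
        intro v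
        rw [hkerdef]
        rw [ENNReal.ofReal_rpow_of_nonneg (Real.exp_pos _).le (by linarith : (0:ℝ) ≤ s)]
        rw [← Real.exp_mul, mul_right_comm, neg_mul, hcs, neg_one_mul]
      simp_rw [this]
      exact aux_ker u
    have e2 : ∫⁻ v, (f v ^ (2-p)) ^ r = J := by
      rw [hJdef]
      congr 1
      ext v
      rw [← ENNReal.rpow_mul, show (2-p) * r = p by rw [hrdef]; field_simp]
    calc ∫⁻ v, ker u v * f v ^ (2-p)
        = ∫⁻ v, ((fun v => ker u v) * fun v => f v ^ (2-p)) v := rfl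
      _ ≤ (∫⁻ v, ker u v ^ s) ^ (1/s) * (∫⁻ v, (f v ^ (2-p)) ^ r) ^ (1/r) := hH
      _ = (2:ℝ≥0∞) ^ (2 - 2/p) * J ^ ((2-p)/p) := by rw [e1, e2, h1s, h1r]
  -- the main iterated lintegral
  set I : ℝ≥0∞ := ∫⁻ u, ∫⁻ v, ENNReal.ofReal (|h u| * Real.exp (-c * |u - v|) * |h v|) with hIdef
  set X : ℝ → ℝ → ℝ≥0∞ := fun u v => f u ^ p * (ker u v * f v ^ (2-p)) with hXdef
  set Y : ℝ → ℝ → ℝ≥0∞ := fun u v => f u ^ (2-p) * (ker u v * f v ^ p) with hYdef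
  have hXm : Measurable (Function.uncurry X) := by
    apply Measurable.mul
    · exact (hfm.comp measurable_fst).pow_const p
    · exact hkerm.mul ((hfm.comp measurable_snd).pow_const (2-p))
  have hYm : Measurable (Function.uncurry Y) := by
    apply Measurable.mul
    · exact (hfm.comp measurable_fst).pow_const (2-p)
    · exact hkerm.mul ((hfm.comp measurable_snd).pow_const p)
  -- pointwise bound
  have hpt : ∀ u v : ℝ, ENNReal.ofReal (|h u| * Real.exp (-c * |u - v|) * |h v|) ≤
      ENNReal.ofReal (1/2) * (X u v + Y u v) := by
    intro u v
    have hexp : (0:ℝ) < Real.exp (-c * |u - v|) := Real.exp_pos _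
    have hb := aux_amgm hp hp2 (abs_nonneg (h u)) (abs_nonneg (h v))
    have hb2 : |h u| * Real.exp (-c * |u - v|) * |h v| ≤
        (1/2) * ((|h u| ^ p * |h v| ^ (2-p)) * Real.exp (-c * |u - v|)
          + (|h u| ^ (2-p) * |h v| ^ p) * Real.exp (-c * |u - v|)) := by
      have := mul_le_mul_of_nonneg_right hb hexp.le
      calc |h u| * Real.exp (-c * |u - v|) * |h v|
          = (|h u| * |h v|) * Real.exp (-c * |u - v|) := by ring
        _ ≤ ((|h u| ^ p * |h v| ^ (2 - p) + |h u| ^ (2 - p) * |h v| ^ p) / 2)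
            * Real.exp (-c * |u - v|) := this
        _ = (1/2) * ((|h u| ^ p * |h v| ^ (2-p)) * Real.exp (-c * |u - v|)
            + (|h u| ^ (2-p) * |h v| ^ p) * Real.exp (-c * |u - v|)) := by ring
    calc ENNReal.ofReal (|h u| * Real.exp (-c * |u - v|) * |h v|)
        ≤ ENNReal.ofReal ((1/2) * ((|h u| ^ p * |h v| ^ (2-p)) * Real.exp (-c * |u - v|)
            + (|h u| ^ (2-p) * |h v| ^ p) * Real.exp (-c * |u - v|))) :=
          ENNReal.ofReal_le_ofReal hb2
      _ = ENNReal.ofReal (1/2) * (X u v + Y u v) := by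
          rw [ENNReal.ofReal_mul (by norm_num : (0:ℝ) ≤ 1/2), ENNReal.ofReal_add (by positivity) (by positivity)]
          congr 1
          · congr 1
            · rw [hXdef, hfdef, hkerdef]
              rw [ENNReal.ofReal_mul (by positivity), ENNReal.ofReal_mul (by positivity),
                ← ENNReal.ofReal_rpow_of_nonneg (abs_nonneg _) hp0.le,
                ← ENNReal.ofReal_rpow_of_nonneg (abs_nonneg _) h2p.le]
              ring
            · rw [hYdef, hfdef, hkerdef]
              rw [ENNReal.ofReal_mul (by positivity), ENNReal.ofReal_mul (by positivity),
                ← ENNReal.ofReal_rpow_of_nonneg (abs_nonneg _) hp0.le,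
                ← ENNReal.ofReal_rpow_of_nonneg (abs_nonneg _) h2p.le]
              ring
  -- symmetry: ∫∫ Y = ∫∫ X
  have hswap : ∫⁻ u, ∫⁻ v, Y u v = ∫⁻ u, ∫⁻ v, X u v := by
    rw [lintegral_lintegral_swap hYm.aemeasurable]
    apply lintegral_congr
    intro v
    apply lintegral_congr
    intro u
    have kersym : ker u v = ker v u := by rw [hkerdef]; simp only [abs_sub_comm v u]
    show f u ^ (2-p) * (ker u v * f v ^ p) = f v ^ p * (ker v u * f u ^ (2-p))
    rw [kersym]; ring
  -- I ≤ ∫∫ X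
  have hI1 : I ≤ ∫⁻ u, ∫⁻ v, X u v := by
    have step1 : I ≤ ∫⁻ u, ∫⁻ v, ENNReal.ofReal (1/2) * (X u v + Y u v) := by
      rw [hIdef]
      exact lintegral_mono fun u => lintegral_mono fun v => hpt u v
    have step2 : ∫⁻ u, ∫⁻ v, ENNReal.ofReal (1/2) * (X u v + Y u v)
        = ENNReal.ofReal (1/2) * ((∫⁻ u, ∫⁻ v, X u v) + (∫⁻ u, ∫⁻ v, Y u v)) := by
      have inner : ∀ u, ∫⁻ v, ENNReal.ofReal (1/2) * (X u v + Y u v)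
          = ENNReal.ofReal (1/2) * ((∫⁻ v, X u v) + ∫⁻ v, Y u v) := by
        intro u
        rw [lintegral_const_mul' _ _ ENNReal.ofReal_ne_top]
        congr 1
        exact lintegral_add_left (hXm.comp (measurable_prodMk_left)) _
      simp_rw [inner]
      rw [lintegral_const_mul' _ _ ENNReal.ofReal_ne_top]
      congr 1
      exact lintegral_add_left (hXm.lintegral_prod_right') _
    have step3 : ENNReal.ofReal (1/2) * ((∫⁻ u, ∫⁻ v, X u v) + (∫⁻ u, ∫⁻ v, Y u v))
        = ∫⁻ u, ∫⁻ v, X u v := by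
      rw [hswap, ← two_mul, ← mul_assoc]
      have : ENNReal.ofReal (1/2) * 2 = 1 := by
        rw [show ((2:ℝ≥0∞)) = ENNReal.ofReal 2 by norm_num,
          ← ENNReal.ofReal_mul (by norm_num : (0:ℝ) ≤ 1/2)]
        norm_num
      rw [this, one_mul]
    exact step1.trans (le_of_eq (step2.trans step3))
  -- bound ∫∫ X
  have hX2 : ∫⁻ u, ∫⁻ v, X u v ≤ (2:ℝ≥0∞) ^ (2 - 2/p) * J ^ (2/p) := by
    have inner : ∀ u, ∫⁻ v, X u v = f u ^ p * ∫⁻ v, ker u v * f v ^ (2-p) := by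
      intro u
      rw [hXdef]
      exact lintegral_const_mul' _ _
        (ENNReal.rpow_ne_top_of_nonneg hp0.le ENNReal.ofReal_ne_top)
    calc ∫⁻ u, ∫⁻ v, X u v
        = ∫⁻ u, f u ^ p * ∫⁻ v, ker u v * f v ^ (2-p) := by simp_rw [inner]
      _ ≤ ∫⁻ u, f u ^ p * ((2:ℝ≥0∞) ^ (2 - 2/p) * J ^ ((2-p)/p)) :=
          lintegral_mono fun u => mul_le_mul_right (key_inner u) _
      _ = J * ((2:ℝ≥0∞) ^ (2 - 2/p) * J ^ ((2-p)/p)) := by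
          have h22p : (0:ℝ) ≤ 2 - 2/p := by
            have : 2/p ≤ 2 := by rw [div_le_iff₀ hp0]; nlinarith
            linarith
          rw [lintegral_mul_const' _ _ (ENNReal.mul_ne_top
            (ENNReal.rpow_ne_top_of_nonneg h22p (by simp))
            (ENNReal.rpow_ne_top_of_nonneg (by positivity) hJtop))]
      _ = (2:ℝ≥0∞) ^ (2 - 2/p) * J ^ (2/p) := by
          rw [show (2:ℝ)/p = 1 + (2-p)/p by field_simp; ring, ENNReal.rpow_add_of_nonneg _ _
            (by norm_num) (by positivity), ENNReal.rpow_one]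
          ring
  -- conclusion
  set F : ℝ × ℝ → ℝ := fun z => h z.1 * Real.exp (-c * |z.1 - z.2|) * h z.2 with hFdef
  have hFm : Measurable F :=
    ((hm.comp measurable_fst).mul
      (((measurable_fst.sub measurable_snd).abs.const_mul (-c)).exp)).mul (hm.comp measurable_snd)
  have hnorm : ∀ z : ℝ × ℝ, ENNReal.ofReal ‖F z‖ =
      ENNReal.ofReal (|h z.1| * Real.exp (-c * |z.1 - z.2|) * |h z.2|) := by
    intro z
    rw [hFdef]
    simp only [Real.norm_eq_abs]
    rw [abs_mul, abs_mul, abs_of_pos (Real.exp_pos _)]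
  have hprod : ∫⁻ z : ℝ × ℝ, ENNReal.ofReal ‖F z‖ ∂(volume.prod volume) = I := by
    simp_rw [hnorm]
    rw [lintegral_prod _ (by
      apply Measurable.aemeasurable
      apply ENNReal.measurable_ofReal.comp
      exact ((hm.comp measurable_fst).abs.mul
        (((measurable_fst.sub measurable_snd).abs.const_mul (-c)).exp)).mul
        (hm.comp measurable_snd).abs)]
  have hIbound : I ≤ (2:ℝ≥0∞) ^ (2 - 2/p) * J ^ (2/p) := hI1.trans hX2
  have h22p : (0:ℝ) ≤ 2 - 2/p := by
    have : 2/p ≤ 2 := by rw [div_le_iff₀ hp0]; nlinarith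
    linarith
  have hRHStop : (2:ℝ≥0∞) ^ (2 - 2/p) * J ^ (2/p) ≠ ⊤ :=
    ENNReal.mul_ne_top (ENNReal.rpow_ne_top_of_nonneg h22p (by simp))
      (ENNReal.rpow_ne_top_of_nonneg (by positivity) hJtop)
  have hFint : Integrable F (volume.prod volume) := by
    refine ⟨hFm.aestronglyMeasurable, ?_⟩
    rw [hasFiniteIntegral_iff_norm, hprod]
    exact lt_of_le_of_lt hIbound (lt_top_iff_ne_top.mpr hRHStop)
  have hInonneg : (0:ℝ) ≤ ∫ x, |h x| ^ p :=
    integral_nonneg fun x => Real.rpow_nonneg (abs_nonneg _) _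
  calc |∫ u, ∫ v, h u * Real.exp (-c * |u - v|) * h v|
      = |∫ z : ℝ × ℝ, F z ∂(volume.prod volume)| := by
        rw [integral_integral hFint]
    _ ≤ (∫⁻ z : ℝ × ℝ, ENNReal.ofReal ‖F z‖ ∂(volume.prod volume)).toReal := by
        rw [← Real.norm_eq_abs]
        exact norm_integral_le_lintegral_norm F
    _ = I.toReal := by rw [hprod]
    _ ≤ ((2:ℝ≥0∞) ^ (2 - 2/p) * J ^ (2/p)).toReal := ENNReal.toReal_mono hRHStop hIbound
    _ = (2:ℝ) ^ (2 - 2/p) * (∫ x, |h x| ^ p) ^ (2/p) := by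
        rw [ENNReal.toReal_mul, ← ENNReal.toReal_rpow, ← ENNReal.toReal_rpow, hJ,
          ENNReal.toReal_ofReal hInonneg]
        norm_num

theorem stmt7 (p : ℝ) (hp : 1 < p) (hp2 : p < 2) (h : ℝ → ℝ)
    (hh : MemLp h (ENNReal.ofReal p)) :
    |∫ u, ∫ v, h u * Real.exp (-(2/(p/(p-1))) * |u - v|) * h v| ≤
      (2/(p/(p-1))) *
      (((p/(p-1))/2) ^ (2/p) *
        (Gamma (2*p/(2-p)) / (Gamma (2/(2-p)) * Gamma (p/(2-p)))) ^ (2/p - 1)) *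
      (∫ x, |h x| ^ p) ^ (2/p) := by
  obtain ⟨g, hgm, hae⟩ : ∃ g : ℝ → ℝ, Measurable g ∧ h =ᵐ[volume] g :=
    ⟨hh.aestronglyMeasurable.mk h, hh.aestronglyMeasurable.stronglyMeasurable_mk.measurable,
      hh.aestronglyMeasurable.ae_eq_mk⟩
  have hg : MemLp g (ENNReal.ofReal p) := hh.ae_eq hae
  have hout : (∫ u, ∫ v, h u * Real.exp (-(2/(p/(p-1))) * |u - v|) * h v)
      = ∫ u, ∫ v, g u * Real.exp (-(2/(p/(p-1))) * |u - v|) * g v := by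
    apply integral_congr_ae
    filter_upwards [hae] with u hu
    rw [hu]
    exact integral_congr_ae (hae.mono fun v hv => by simp only [hv])
  have hnrm : (∫ x, |h x| ^ p) = ∫ x, |g x| ^ p :=
    integral_congr_ae (hae.mono fun x hx => by simp only [hx])
  rw [hout, hnrm]
  refine (main_aux p hp hp2 g hgm hg).trans ?_
  exact mul_le_mul_of_nonneg_right (aux_const p hp hp2)
    (Real.rpow_nonneg (integral_nonneg fun x => Real.rpow_nonneg (abs_nonneg _) _) _)
end
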